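/- Let N ⊆ M_d(ℂ) be a unital *-subalgebra, E : M_d(ℂ) → N the trace-preserving conditional expectation onto N, and σ, ρ positive definite states on M_d(ℂ). Then ‖σ_N^{−1/2} ρ_N σ_N^{−1/2}‖∞ ≤ ‖σ^{−1/2} ρ σ^{−1/2}‖∞. -/

import Mathlib

open Matrix MeasureTheory Filter Topology Kronecker ComplexOrder

/-- Apply a real function to a matrix via the functional calculus for Hermitian
matrices (and return `0` on non-Hermitian input). -/
noncomputable def mfun {d : ℕ} (f : ℝ → ℝ) (A : Matrix (Fin d) (Fin d) ℂ) :
    Matrix (Fin d) (Fin d) ℂ :=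
  if hA : A.IsHermitian then hA.cfc f else 0

/-- Square root of a Hermitian positive semidefinite matrix. -/
noncomputable def msqrt {d : ℕ} (A : Matrix (Fin d) (Fin d) ℂ) : Matrix (Fin d) (Fin d) ℂ :=
  mfun Real.sqrt A

/-- Inverse square root of a Hermitian positive semidefinite matrix (Moore–Penrose
pseudoinverse of the square root in the singular case, since `(0 : ℝ)⁻¹ = 0`). -/
noncomputable def misqrt {d : ℕ} (A : Matrix (Fin d) (Fin d) ℂ) : Matrix (Fin d) (Fin d) ℂ :=
  mfun (fun x => (Real.sqrt x)⁻¹) A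

/-- Inverse of a Hermitian matrix (Moore–Penrose pseudoinverse in the singular case). -/
noncomputable def minv {d : ℕ} (A : Matrix (Fin d) (Fin d) ℂ) : Matrix (Fin d) (Fin d) ℂ :=
  mfun (fun x => x⁻¹) A

/-- Logarithm of a positive definite matrix. -/
noncomputable def mlog {d : ℕ} (A : Matrix (Fin d) (Fin d) ℂ) : Matrix (Fin d) (Fin d) ℂ :=
  mfun Real.log A

/-- Frobenius (Schatten-2) norm ‖A‖₂ = tr(AᴴA)^(1/2). -/
noncomputable def frob {n : Type*} [Fintype n] (A : Matrix n n ℂ) : ℝ :=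
  Real.sqrt (Matrix.trace (Aᴴ * A)).re

/-- Operator norm ‖A‖∞ of a matrix, acting on the Euclidean space ℂᵈ. -/
noncomputable def opNorm {n : Type*} [Fintype n] [DecidableEq n] (A : Matrix n n ℂ) : ℝ :=
  ‖LinearMap.toContinuousLinearMap (Matrix.toEuclideanLin A)‖

/-- The Belavkin–Staszewski relative entropy
`Ŝ_BS(σ‖ρ) = −tr[σ log(σ^{−1/2} ρ σ^{−1/2})]`. -/
noncomputable def BS {d : ℕ} (σ ρ : Matrix (Fin d) (Fin d) ℂ) : ℝ :=
  -(Matrix.trace (σ * mlog (misqrt σ * ρ * misqrt σ))).re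

/-- The maximal f-divergence `Ŝ_f(σ‖ρ) = tr[ρ^{1/2} f(ρ^{−1/2} σ ρ^{−1/2}) ρ^{1/2}]`. -/
noncomputable def hatS {d : ℕ} (f : ℝ → ℝ) (σ ρ : Matrix (Fin d) (Fin d) ℂ) : ℝ :=
  (Matrix.trace (msqrt ρ * mfun f (misqrt ρ * σ * misqrt ρ) * msqrt ρ)).re

/-- The Umegaki relative entropy `D(σ‖ρ) = tr[σ (log σ − log ρ)]`. -/
noncomputable def relEnt {d : ℕ} (σ ρ : Matrix (Fin d) (Fin d) ℂ) : ℝ :=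
  (Matrix.trace (σ * (mlog σ - mlog ρ))).re

/-- The Choi matrix of a linear map between matrix algebras. -/
noncomputable def choi {d₁ d₂ : ℕ} (T : Matrix (Fin d₁) (Fin d₁) ℂ →ₗ[ℂ] Matrix (Fin d₂) (Fin d₂) ℂ) :
    Matrix (Fin d₁ × Fin d₂) (Fin d₁ × Fin d₂) ℂ :=
  Matrix.of fun p q => T (Matrix.single p.1 q.1 1) p.2 q.2

/-- A quantum channel: a completely positive (equivalently, with positive semidefinite Choi
matrix) trace-preserving linear map. -/
def IsCPTP {d₁ d₂ : ℕ} (T : Matrix (Fin d₁) (Fin d₁) ℂ →ₗ[ℂ] Matrix (Fin d₂) (Fin d₂) ℂ) :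
    Prop :=
  (choi T).PosSemidef ∧ ∀ A, (T A).trace = A.trace

/-- Partial trace over the second tensor factor. -/
noncomputable def ptrace2 {d₂ s : ℕ} (M : Matrix (Fin d₂ × Fin s) (Fin d₂ × Fin s) ℂ) :
    Matrix (Fin d₂) (Fin d₂) ℂ :=
  Matrix.of fun i j => ∑ k : Fin s, M (i, k) (j, k)

/-- The Loewner order: `A ≤ B` iff `B - A` is positive semidefinite. -/
def Loewner {n : ℕ} (A B : Matrix (Fin n) (Fin n) ℂ) : Prop := (B - A).PosSemidef

/-- A function `f : (0,∞) → ℝ` is operator convex. -/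
def OperatorConvex (f : ℝ → ℝ) : Prop :=
  ∀ (n : ℕ) (A B : Matrix (Fin n) (Fin n) ℂ), A.PosDef → B.PosDef →
    ∀ t : ℝ, 0 ≤ t → t ≤ 1 →
      Loewner (mfun f ((t : ℂ) • A + ((1 - t : ℝ) : ℂ) • B))
        ((t : ℂ) • mfun f A + ((1 - t : ℝ) : ℂ) • mfun f B)

/-- A function `f : (0,∞) → ℝ` is operator monotone decreasing. -/
def OperatorAntitone (f : ℝ → ℝ) : Prop :=
  ∀ (n : ℕ) (A B : Matrix (Fin n) (Fin n) ℂ), A.PosDef → B.PosDef →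
    Loewner A B → Loewner (mfun f B) (mfun f A)

section StmtAux

open Matrix

variable {d : ℕ} {A : Matrix (Fin d) (Fin d) ℂ}

lemma mfun_eq (hA : A.IsHermitian) (f : ℝ → ℝ) : mfun f A = hA.cfc f := by
  unfold mfun
  rw [dif_pos hA]

lemma mcfc_mul (hA : A.IsHermitian) (f g : ℝ → ℝ) :
    hA.cfc f * hA.cfc g = hA.cfc (fun x => f x * g x) := by
  unfold Matrix.IsHermitian.cfc
  simp only [Unitary.conjStarAlgAut_apply, Unitary.coe_star]
  have h : ∀ {a b c e u v : Matrix (Fin d) (Fin d) ℂ},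
      (a * b * c) * (u * v * e) = a * (b * (c * u) * v) * e := by
    intros; simp only [mul_assoc]
  rw [h, Unitary.coe_star_mul_self, mul_one, diagonal_mul_diagonal]
  congr 2
  ext i j
  rcases eq_or_ne i j with rfl | hij
  · simp
  · simp [Matrix.diagonal_apply_ne _ hij]

lemma mcfc_add (hA : A.IsHermitian) (f g : ℝ → ℝ) :
    hA.cfc f + hA.cfc g = hA.cfc (fun x => f x + g x) := by
  unfold Matrix.IsHermitian.cfc
  simp only [Unitary.conjStarAlgAut_apply, Unitary.coe_star]
  rw [← add_mul, ← mul_add, diagonal_add]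
  congr 2
  ext i j
  rcases eq_or_ne i j with rfl | hij
  · simp
  · simp [Matrix.diagonal_apply_ne _ hij]

lemma mcfc_congr (hA : A.IsHermitian) (f g : ℝ → ℝ)
    (h : ∀ i, f (hA.eigenvalues i) = g (hA.eigenvalues i)) : hA.cfc f = hA.cfc g := by
  unfold Matrix.IsHermitian.cfc
  simp only [Unitary.conjStarAlgAut_apply, Unitary.coe_star]
  congr 2
  ext i j
  rcases eq_or_ne i j with rfl | hij
  · simp [h i]
  · simp [Matrix.diagonal_apply_ne _ hij]

lemma mcfc_mul_star_self (hA : A.IsHermitian) :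
    (hA.eigenvectorUnitary : Matrix (Fin d) (Fin d) ℂ)
      * star (hA.eigenvectorUnitary : Matrix (Fin d) (Fin d) ℂ) = 1 :=
  (Matrix.mem_unitaryGroup_iff).mp hA.eigenvectorUnitary.2

lemma mcfc_one (hA : A.IsHermitian) : hA.cfc (fun _ => 1) = 1 := by
  unfold Matrix.IsHermitian.cfc
  simp only [Unitary.conjStarAlgAut_apply, Unitary.coe_star]
  have h1 : diagonal (RCLike.ofReal ∘ (fun _ : ℝ => (1:ℝ)) ∘ hA.eigenvalues)
      = (1 : Matrix (Fin d) (Fin d) ℂ) := by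
    simp [Function.comp_def]
  rw [h1, mul_one, mcfc_mul_star_self hA]

lemma mcfc_id (hA : A.IsHermitian) : hA.cfc (fun x => x) = A := by
  conv_rhs => rw [hA.spectral_theorem]
  rfl

lemma mcfc_const (hA : A.IsHermitian) (c : ℝ) : hA.cfc (fun _ => c) = (c : ℂ) • 1 := by
  unfold Matrix.IsHermitian.cfc
  simp only [Unitary.conjStarAlgAut_apply, Unitary.coe_star]
  have h1 : diagonal (RCLike.ofReal ∘ (fun _ : ℝ => c) ∘ hA.eigenvalues)
      = (c : ℂ) • (1 : Matrix (Fin d) (Fin d) ℂ) := by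
    ext i j
    by_cases hij : i = j <;>
      simp [Matrix.diagonal_apply, Matrix.one_apply, Matrix.smul_apply, hij]
  rw [h1, mul_smul_comm, smul_mul_assoc, mul_one, mcfc_mul_star_self hA]

lemma mcfc_herm (hA : A.IsHermitian) (f : ℝ → ℝ) : (hA.cfc f).IsHermitian := by
  unfold Matrix.IsHermitian Matrix.IsHermitian.cfc
  simp only [Unitary.conjStarAlgAut_apply, Unitary.coe_star]
  rw [conjTranspose_mul, conjTranspose_mul, diagonal_conjTranspose]
  rw [show (star (hA.eigenvectorUnitary : Matrix (Fin d) (Fin d) ℂ))ᴴ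
      = (hA.eigenvectorUnitary : Matrix (Fin d) (Fin d) ℂ) from star_star _]
  rw [mul_assoc]
  congr 1
  congr 1
  ext i
  simp [Pi.star_def, Function.comp_def]

lemma mcfc_psd (hA : A.IsHermitian) (f : ℝ → ℝ)
    (hf : ∀ i, 0 ≤ f (hA.eigenvalues i)) : (hA.cfc f).PosSemidef := by
  have key : hA.cfc f
      = hA.cfc (fun x => Real.sqrt (f x)) * hA.cfc (fun x => Real.sqrt (f x)) := by
    rw [mcfc_mul hA]
    exact mcfc_congr hA _ _ fun i => (Real.mul_self_sqrt (hf i)).symm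
  have hB := Matrix.posSemidef_conjTranspose_mul_self (hA.cfc fun x => Real.sqrt (f x))
  rw [show (hA.cfc fun x => Real.sqrt (f x))ᴴ = hA.cfc fun x => Real.sqrt (f x) from
    mcfc_herm hA _] at hB
  rw [key]
  exact hB

/-- Existence of a Hermitian square root of a PSD matrix (self-contained). -/
lemma psd_sqrt_exists {Y : Matrix (Fin d) (Fin d) ℂ} (hY : Y.PosSemidef) :
    ∃ S : Matrix (Fin d) (Fin d) ℂ, Sᴴ = S ∧ S * S = Y := by
  refine ⟨hY.1.cfc Real.sqrt, mcfc_herm hY.1 _, ?_⟩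
  rw [mcfc_mul hY.1]
  rw [mcfc_congr hY.1 _ (fun x => x) fun i => Real.mul_self_sqrt (hY.eigenvalues_nonneg i)]
  exact mcfc_id hY.1

lemma msqrt_herm (hA : A.PosDef) : (msqrt A).IsHermitian := by
  rw [msqrt, mfun_eq hA.1]; exact mcfc_herm hA.1 _

lemma misqrt_herm (hA : A.PosDef) : (misqrt A).IsHermitian := by
  rw [misqrt, mfun_eq hA.1]; exact mcfc_herm hA.1 _

lemma msqrt_mul_self (hA : A.PosDef) : msqrt A * msqrt A = A := by
  rw [msqrt, mfun_eq hA.1, mcfc_mul hA.1]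
  rw [mcfc_congr hA.1 _ (fun x => x) fun i =>
    Real.mul_self_sqrt (hA.eigenvalues_pos i).le]
  exact mcfc_id hA.1

lemma msqrt_mul_misqrt (hA : A.PosDef) : msqrt A * misqrt A = 1 := by
  rw [msqrt, misqrt, mfun_eq hA.1, mfun_eq hA.1, mcfc_mul hA.1]
  rw [mcfc_congr hA.1 _ (fun _ => 1) fun i => by
    field_simp [Real.sqrt_ne_zero'.mpr (hA.eigenvalues_pos i)]]
  exact mcfc_one hA.1

lemma misqrt_mul_msqrt (hA : A.PosDef) : misqrt A * msqrt A = 1 := by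
  rw [msqrt, misqrt, mfun_eq hA.1, mfun_eq hA.1, mcfc_mul hA.1]
  rw [mcfc_congr hA.1 _ (fun _ => 1) fun i => by
    field_simp [Real.sqrt_ne_zero'.mpr (hA.eigenvalues_pos i)]]
  exact mcfc_one hA.1

lemma misqrt_conj (hA : A.PosDef) : misqrt A * A * misqrt A = 1 := by
  have e : misqrt A * A * misqrt A
      = misqrt A * (msqrt A * msqrt A) * misqrt A := by rw [msqrt_mul_self hA]
  rw [e]
  calc misqrt A * (msqrt A * msqrt A) * misqrt A
      = (misqrt A * msqrt A) * (msqrt A * misqrt A) := by simp only [mul_assoc]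
    _ = 1 := by rw [misqrt_mul_msqrt hA, msqrt_mul_misqrt hA, one_mul]

/-- The operator norm as the norm of the associated continuous linear map. -/
lemma opNorm_def' (B : Matrix (Fin d) (Fin d) ℂ) :
    opNorm B = ‖LinearMap.toContinuousLinearMap (Matrix.toEuclideanLin B)‖ := rfl

lemma opNorm_nonneg' (B : Matrix (Fin d) (Fin d) ℂ) : 0 ≤ opNorm B := norm_nonneg _

lemma re_quad_le (X : Matrix (Fin d) (Fin d) ℂ) (x : Fin d → ℂ) :
    (star x ⬝ᵥ (X *ᵥ x)).re
      ≤ opNorm X * ‖(WithLp.equiv 2 (Fin d → ℂ)).symm x‖ ^ 2 := by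
  set v : EuclideanSpace ℂ (Fin d) := (WithLp.equiv 2 (Fin d → ℂ)).symm x with hv
  set w : EuclideanSpace ℂ (Fin d) := (WithLp.equiv 2 (Fin d → ℂ)).symm (X *ᵥ x) with hw
  have hinner : inner ℂ v w = star x ⬝ᵥ (X *ᵥ x) := by
    rw [dotProduct_comm]; rfl
  have hwv : w = LinearMap.toContinuousLinearMap (Matrix.toEuclideanLin X) v := by
    rfl
  have h1 : (star x ⬝ᵥ (X *ᵥ x)).re ≤ ‖(inner ℂ v w : ℂ)‖ := by
    rw [hinner]
    exact Complex.re_le_norm _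
  have h2 : ‖(inner ℂ v w : ℂ)‖ ≤ ‖v‖ * ‖w‖ := norm_inner_le_norm v w
  have h3 : ‖w‖ ≤ opNorm X * ‖v‖ := by
    rw [hwv, opNorm_def']
    exact ContinuousLinearMap.le_opNorm _ v
  have hv0 : 0 ≤ ‖v‖ := norm_nonneg v
  nlinarith [h1, h2, h3]

lemma psd_re_nonneg {M : Matrix (Fin d) (Fin d) ℂ} (hM : M.PosSemidef) (x : Fin d → ℂ) :
    0 ≤ (star x ⬝ᵥ (M *ᵥ x)).re ∧ (star x ⬝ᵥ (M *ᵥ x)).im = 0 := by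
  have := hM.dotProduct_mulVec_nonneg x
  rw [Complex.le_def] at this
  exact ⟨by simpa using this.1, by simpa using this.2.symm⟩

lemma norm_sq_vec (x : Fin d → ℂ) :
    star x ⬝ᵥ x = ((‖(WithLp.equiv 2 (Fin d → ℂ)).symm x‖ : ℝ) : ℂ) ^ 2 := by
  rw [show star x ⬝ᵥ x = inner ℂ ((WithLp.equiv 2 (Fin d → ℂ)).symm x)
      ((WithLp.equiv 2 (Fin d → ℂ)).symm x) by rw [dotProduct_comm]; rfl]
  exact inner_self_eq_norm_sq_to_K _

/-- Lemma A: a PSD matrix is dominated by its operator norm times the identity. -/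
lemma smul_one_sub_psd {X : Matrix (Fin d) (Fin d) ℂ} (hX : X.PosSemidef) :
    (((opNorm X : ℝ) : ℂ) • 1 - X).PosSemidef := by
  apply Matrix.PosSemidef.of_dotProduct_mulVec_nonneg
  · have h1 : (((opNorm X : ℝ) : ℂ) • (1 : Matrix (Fin d) (Fin d) ℂ)).IsHermitian := by
      unfold Matrix.IsHermitian
      simp [Matrix.conjTranspose_smul, Complex.star_def, Complex.conj_ofReal]
    exact h1.sub hX.1
  · intro x
    obtain ⟨hre, him⟩ := psd_re_nonneg hX x
    set r := (star x ⬝ᵥ (X *ᵥ x)).re with hrdef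
    have hz : star x ⬝ᵥ (X *ᵥ x) = ((r : ℝ) : ℂ) := by
      apply Complex.ext <;> simp [him, hrdef]
    have hq : star x ⬝ᵥ (((((opNorm X : ℝ) : ℂ)) • 1 - X) *ᵥ x)
        = ((opNorm X * ‖(WithLp.equiv 2 (Fin d → ℂ)).symm x‖ ^ 2
            - r : ℝ) : ℂ) := by
      rw [Matrix.sub_mulVec, dotProduct_sub, Matrix.smul_mulVec, Matrix.one_mulVec,
        dotProduct_smul, smul_eq_mul, norm_sq_vec x]
      rw [hz]
      push_cast
      ring
    rw [hq, Complex.zero_le_real]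
    have := re_quad_le X x
    linarith

/-- Lemma B: a PSD matrix dominated by `c • 1` has operator norm at most `c`. -/
lemma opNorm_le_of_psd_le {Y : Matrix (Fin d) (Fin d) ℂ} (hY : Y.PosSemidef)
    {c : ℝ} (hc : 0 ≤ c) (h : (((c : ℝ) : ℂ) • 1 - Y).PosSemidef) : opNorm Y ≤ c := by
  classical
  obtain ⟨S, hSherm, hSS⟩ := psd_sqrt_exists hY
  have key : (((c : ℝ) : ℂ) • Y - Y * Y).PosSemidef := by
    have h2 := h.mul_mul_conjTranspose_same S
    rw [hSherm] at h2
    have e : S * ((((c : ℝ) : ℂ)) • 1 - Y) * S = ((c : ℝ) : ℂ) • Y - Y * Y := by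
      rw [mul_sub, sub_mul, mul_smul_comm, smul_mul_assoc, mul_one, hSS]
      congr 1
      rw [← hSS]
      simp only [mul_assoc]
    rwa [e] at h2
  -- pointwise bound
  have bound : ∀ x : Fin d → ℂ,
      ‖(WithLp.equiv 2 (Fin d → ℂ)).symm (Y *ᵥ x)‖
        ≤ c * ‖(WithLp.equiv 2 (Fin d → ℂ)).symm x‖ := by
    intro x
    have hsq : ((‖(WithLp.equiv 2 (Fin d → ℂ)).symm (Y *ᵥ x)‖ : ℝ) : ℂ) ^ 2
        = star (Y *ᵥ x) ⬝ᵥ (Y *ᵥ x) := (norm_sq_vec (Y *ᵥ x)).symm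
    have hYY : star (Y *ᵥ x) ⬝ᵥ (Y *ᵥ x) = star x ⬝ᵥ ((Y * Y) *ᵥ x) := by
      rw [Matrix.star_mulVec, show Yᴴ = Y from hY.1, ← Matrix.mulVec_mulVec,
        Matrix.dotProduct_mulVec, Matrix.dotProduct_mulVec, Matrix.dotProduct_mulVec]
    have hre : ‖(WithLp.equiv 2 (Fin d → ℂ)).symm (Y *ᵥ x)‖ ^ 2
        = (star x ⬝ᵥ ((Y * Y) *ᵥ x)).re := by
      rw [← hYY, ← hsq]
      simp [← Complex.ofReal_pow]
    have h1 : (star x ⬝ᵥ ((Y * Y) *ᵥ x)).re ≤ c * (star x ⬝ᵥ (Y *ᵥ x)).re := by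
      have h' := (psd_re_nonneg key x).1
      rw [Matrix.sub_mulVec, dotProduct_sub, Matrix.smul_mulVec, dotProduct_smul,
        smul_eq_mul] at h'
      simp only [Complex.sub_re, Complex.mul_re, Complex.ofReal_re, Complex.ofReal_im,
        zero_mul, sub_zero] at h'
      linarith
    have h2 : (star x ⬝ᵥ (Y *ᵥ x)).re
        ≤ c * ‖(WithLp.equiv 2 (Fin d → ℂ)).symm x‖ ^ 2 := by
      have h' := (psd_re_nonneg h x).1
      rw [Matrix.sub_mulVec, dotProduct_sub, Matrix.smul_mulVec, Matrix.one_mulVec,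
        dotProduct_smul, smul_eq_mul, norm_sq_vec x] at h'
      simp only [Complex.sub_re, Complex.mul_re, Complex.ofReal_re, Complex.ofReal_im,
        zero_mul, sub_zero, ← Complex.ofReal_pow] at h'
      linarith
    have hq0 := (psd_re_nonneg (hY.conjTranspose_mul_mul_same (1 : Matrix (Fin d) (Fin d) ℂ)) x).1
    have hYx0 : 0 ≤ (star x ⬝ᵥ (Y *ᵥ x)).re := (psd_re_nonneg hY x).1
    have hsq' : ‖(WithLp.equiv 2 (Fin d → ℂ)).symm (Y *ᵥ x)‖ ^ 2
        ≤ (c * ‖(WithLp.equiv 2 (Fin d → ℂ)).symm x‖) ^ 2 := by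
      rw [hre]
      calc (star x ⬝ᵥ ((Y * Y) *ᵥ x)).re ≤ c * (star x ⬝ᵥ (Y *ᵥ x)).re := h1
        _ ≤ c * (c * ‖(WithLp.equiv 2 (Fin d → ℂ)).symm x‖ ^ 2) :=
            mul_le_mul_of_nonneg_left h2 hc
        _ = (c * ‖(WithLp.equiv 2 (Fin d → ℂ)).symm x‖) ^ 2 := by ring
    have hnw0 : 0 ≤ ‖(WithLp.equiv 2 (Fin d → ℂ)).symm (Y *ᵥ x)‖ := norm_nonneg _
    have hcnv : 0 ≤ c * ‖(WithLp.equiv 2 (Fin d → ℂ)).symm x‖ :=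
      mul_nonneg hc (norm_nonneg _)
    nlinarith [hsq', hnw0, hcnv]
  rw [opNorm_def']
  apply ContinuousLinearMap.opNorm_le_bound _ hc
  intro v
  have hb := bound (WithLp.equiv 2 (Fin d → ℂ) v)
  simpa [Matrix.toEuclideanLin_apply] using hb

end StmtAux

theorem stmt9 {d : ℕ}
    (N : Subalgebra ℂ (Matrix (Fin d) (Fin d) ℂ))
    (hNstar : ∀ A ∈ N, Aᴴ ∈ N)
    (E : Matrix (Fin d) (Fin d) ℂ →ₗ[ℂ] Matrix (Fin d) (Fin d) ℂ)
    (hEpos : ∀ A : Matrix (Fin d) (Fin d) ℂ, A.PosSemidef → (E A).PosSemidef)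
    (hEmem : ∀ A : Matrix (Fin d) (Fin d) ℂ, E A ∈ N)
    (hEfix : ∀ B ∈ N, E B = B)
    (hEmod : ∀ (A : Matrix (Fin d) (Fin d) ℂ), ∀ B ∈ N, E (A * B) = E A * B)
    (hEtr : ∀ A : Matrix (Fin d) (Fin d) ℂ, (E A).trace = A.trace)
    (σ ρ : Matrix (Fin d) (Fin d) ℂ)
    (hσ : σ.PosDef) (hσtr : σ.trace = 1)
    (hρ : ρ.PosDef) (hρtr : ρ.trace = 1) :
    opNorm (misqrt (E σ) * E ρ * misqrt (E σ)) ≤ opNorm (misqrt σ * ρ * misqrt σ) := by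
  classical
  rcases Nat.eq_zero_or_pos d with hd | hd
  · subst hd
    have : misqrt (E σ) * E ρ * misqrt (E σ) = misqrt σ * ρ * misqrt σ :=
      Matrix.ext fun i _ => i.elim0
    rw [this]
  · haveI : Nonempty (Fin d) := ⟨⟨0, hd⟩⟩
    -- E σ is positive definite
    set ε := Finset.univ.inf' Finset.univ_nonempty hσ.1.eigenvalues with hεdef
    have hεpos : 0 < ε := by
      rw [hεdef]
      rw [Finset.lt_inf'_iff]
      exact fun i _ => hσ.eigenvalues_pos i
    have h1 : hσ.1.cfc (fun x => x - ε) + (ε : ℂ) • 1 = σ := by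
      rw [← mcfc_const hσ.1 ε, mcfc_add hσ.1]
      rw [show (fun x : ℝ => x - ε + ε) = fun x : ℝ => x from funext fun x => by ring]
      exact mcfc_id hσ.1
    have hσε : (σ - (ε : ℂ) • 1).PosSemidef := by
      rw [← h1, add_sub_cancel_right]
      exact mcfc_psd hσ.1 _ fun i =>
        sub_nonneg.2 (Finset.inf'_le _ (Finset.mem_univ i))
    have hone : ((ε : ℂ) • (1 : Matrix (Fin d) (Fin d) ℂ)).PosDef := by
      have e : (ε : ℂ) • (1 : Matrix (Fin d) (Fin d) ℂ)
          = Matrix.diagonal (fun _ => (ε : ℂ)) := by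
        ext i j
        by_cases hij : i = j <;>
          simp [Matrix.diagonal_apply, Matrix.one_apply, Matrix.smul_apply, hij]
      rw [e]
      exact Matrix.PosDef.diagonal fun _ => by
        rw [Complex.zero_lt_real]; exact hεpos
    have hEσε : (E σ - (ε : ℂ) • 1).PosSemidef := by
      have h := hEpos _ hσε
      rwa [map_sub, _root_.map_smul, hEfix 1 N.one_mem] at h
    have hEσ : (E σ).PosDef := by
      have e : E σ = (E σ - (ε : ℂ) • 1) + (ε : ℂ) • 1 := by rw [sub_add_cancel]
      rw [e]
      exact Matrix.PosDef.posSemidef_add hEσε hone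
    -- Set up the norm bound
    set lam := opNorm (misqrt σ * ρ * misqrt σ) with hlam
    have hXpsd : (misqrt σ * ρ * misqrt σ).PosSemidef := by
      have h := hρ.posSemidef.conjTranspose_mul_mul_same (misqrt σ)
      rwa [show (misqrt σ)ᴴ = misqrt σ from misqrt_herm hσ] at h
    have hlam0 : 0 ≤ lam := opNorm_nonneg' _
    have hlam1 : (((lam : ℝ) : ℂ) • 1 - misqrt σ * ρ * misqrt σ).PosSemidef :=
      smul_one_sub_psd hXpsd
    -- conjugate by msqrt σ to get lam • σ - ρ ≥ 0
    have hconj : (msqrt σ * (((lam : ℝ) : ℂ) • 1 - misqrt σ * ρ * misqrt σ) * msqrt σ)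
        = ((lam : ℝ) : ℂ) • σ - ρ := by
      rw [mul_sub, sub_mul, mul_smul_comm, smul_mul_assoc, mul_one, msqrt_mul_self hσ]
      congr 1
      calc msqrt σ * (misqrt σ * ρ * misqrt σ) * msqrt σ
          = (msqrt σ * misqrt σ) * ρ * (misqrt σ * msqrt σ) := by simp only [mul_assoc]
        _ = ρ := by rw [msqrt_mul_misqrt hσ, misqrt_mul_msqrt hσ, one_mul, mul_one]
    have hρσ : (((lam : ℝ) : ℂ) • σ - ρ).PosSemidef := by
      have h := hlam1.mul_mul_conjTranspose_same (msqrt σ)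
      rwa [show (msqrt σ)ᴴ = msqrt σ from msqrt_herm hσ, hconj] at h
    -- apply E
    have hEρσ : (((lam : ℝ) : ℂ) • E σ - E ρ).PosSemidef := by
      have h := hEpos _ hρσ
      rwa [map_sub, _root_.map_smul] at h
    -- conjugate by misqrt (E σ)
    have hX'psd : (misqrt (E σ) * E ρ * misqrt (E σ)).PosSemidef := by
      have h := (hEpos ρ hρ.posSemidef).conjTranspose_mul_mul_same (misqrt (E σ))
      rwa [show (misqrt (E σ))ᴴ = misqrt (E σ) from misqrt_herm hEσ] at h
    have hconj2 : misqrt (E σ) * (((lam : ℝ) : ℂ) • E σ - E ρ) * misqrt (E σ)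
        = ((lam : ℝ) : ℂ) • 1 - misqrt (E σ) * E ρ * misqrt (E σ) := by
      rw [mul_sub, sub_mul, mul_smul_comm, smul_mul_assoc, misqrt_conj hEσ]
    have hfinal : (((lam : ℝ) : ℂ) • 1 - misqrt (E σ) * E ρ * misqrt (E σ)).PosSemidef := by
      have h := hEρσ.mul_mul_conjTranspose_same (misqrt (E σ))
      rwa [show (misqrt (E σ))ᴴ = misqrt (E σ) from misqrt_herm hEσ, hconj2] at h
    exact opNorm_le_of_psd_le hX'psd hlam0 hfinal
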